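/- The power of preemption for MINCONNECTIVITY on a path is Θ(log |E|): there exist constants c₁, c₂ > 0 such that (i) for every maintenance instance on a path with n ≥ 2 jobs and every feasible preemptive schedule with busy time a, there exists a feasible non-preemptive schedule with busy time at most c₁ · a · log n; and (ii) for every integer ℓ ≥ 2 there exist a maintenance instance on a path with n = ℓ(ℓ+1)/2 jobs and a feasible preemptive schedule with busy time P > 0 such that every feasible non-preemptive schedule has busy time at least c₂ · P · log n. -/

import Mathlib

open MeasureTheory Set
open scoped ENNReal

/-- Feasibility of a non-preemptive schedule of jobs on a path: job `i` starts at `s i`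
within its window and is processed during `[s i, s i + p i]`. -/
def PathNPFeasible {ι : Type*} (r d p : ι → ℝ) (s : ι → ℝ) : Prop :=
  ∀ i, r i ≤ s i ∧ s i + p i ≤ d i

/-- Feasibility of a preemptive schedule of jobs on a path: job `i` is processed during the
measurable set `S i ⊆ [r i, d i]` of measure `p i`. -/
def PathPFeasible {ι : Type*} (r d p : ι → ℝ) (S : ι → Set ℝ) : Prop :=
  ∀ i, MeasurableSet (S i) ∧ S i ⊆ Set.Icc (r i) (d i) ∧
    volume (S i) = ENNReal.ofReal (p i)

/-- The busy time of a non-preemptive schedule: the measure of the union of the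
processing intervals (= the total disconnected time on a path). -/
noncomputable def npBusy {ι : Type*} (p : ι → ℝ) (s : ι → ℝ) : ℝ≥0∞ :=
  volume (⋃ i, Set.Icc (s i) (s i + p i))

/-- The busy time of a preemptive schedule: the measure of the union of the
processing sets (= the total disconnected time on a path). -/
noncomputable def pBusy {ι : Type*} (S : ι → Set ℝ) : ℝ≥0∞ :=
  volume (⋃ i, S i)

lemma part_one (n : ℕ) (hn : 2 ≤ n) (r d p : Fin n → ℝ)
    (hp : ∀ i, 0 ≤ p i) (hrd : ∀ i, r i + p i ≤ d i)
    (S : Fin n → Set ℝ) (hS : PathPFeasible r d p S)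
    (a : ℝ) (ha : pBusy S = ENNReal.ofReal a) :
    ∃ s : Fin n → ℝ, PathNPFeasible r d p s ∧
      npBusy p s ≤ ENNReal.ofReal (40 * a * Real.log n) := by
  have hrd' : ∀ i, r i ≤ d i := fun i => le_trans (by linarith [hp i]) (hrd i)
  by_cases hA : a ≤ 0
  · refine ⟨r, fun i => ⟨le_rfl, hrd i⟩, ?_⟩
    have hz : ∀ i, p i = 0 := by
      intro i
      have h1 : volume (S i) ≤ pBusy S := measure_mono (subset_iUnion S i)
      rw [ha, (hS i).2.2] at h1
      have h2 : ENNReal.ofReal a = 0 := ENNReal.ofReal_eq_zero.2 hA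
      rw [h2, nonpos_iff_eq_zero] at h1
      have := ENNReal.ofReal_eq_zero.1 h1
      linarith [hp i]
    have hb : npBusy p r ≤ 0 := by
      unfold npBusy
      calc volume (⋃ i, Icc (r i) (r i + p i))
          ≤ ∑' i, volume (Icc (r i) (r i + p i)) := measure_iUnion_le _
        _ = 0 := by
            simp only [Real.volume_Icc]
            convert tsum_zero with i
            rw [hz i]
            simp
    exact le_trans hb zero_le
  push_neg at hA
  set T : Set ℝ := ⋃ i, S i with hT
  have hTmeas : MeasurableSet T := MeasurableSet.iUnion fun i => (hS i).1
  have hTvol : volume T = ENNReal.ofReal a := ha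
  have hTne : volume T ≠ ⊤ := by rw [hTvol]; exact ENNReal.ofReal_ne_top
  set F : ℝ → ℝ := fun x => (volume (T ∩ Iic x)).toReal with hF
  have hFfin : ∀ x : ℝ, volume (T ∩ Iic x) ≠ ⊤ := fun x =>
    ne_top_of_le_ne_top hTne (measure_mono inter_subset_left)
  have hFmono : Monotone F := fun x y hxy =>
    ENNReal.toReal_mono (hFfin y)
      (measure_mono (inter_subset_inter_right _ (Iic_subset_Iic.2 hxy)))
  have hFnonneg : ∀ x, 0 ≤ F x := fun x => ENNReal.toReal_nonneg
  have hFle : ∀ x, F x ≤ a := by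
    intro x
    have := ENNReal.toReal_mono hTne (measure_mono (inter_subset_left : T ∩ Iic x ⊆ T))
    rwa [hTvol, ENNReal.toReal_ofReal hA.le] at this
  have hFstep : ∀ i, F (r i) + p i ≤ F (d i) := by
    intro i
    have hsub : S i \ {r i} ⊆ T ∩ Ioc (r i) (d i) := by
      intro y hy
      have hyT : y ∈ T := subset_iUnion S i hy.1
      have hyw : y ∈ Icc (r i) (d i) := (hS i).2.1 hy.1
      exact ⟨hyT, lt_of_le_of_ne hyw.1 (Ne.symm hy.2), hyw.2⟩
    have hvol1 : ENNReal.ofReal (p i) ≤ volume (T ∩ Ioc (r i) (d i)) := by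
      rw [← (hS i).2.2, ← measure_diff_null (s := S i) Real.volume_singleton]
      exact measure_mono hsub
    have hsplit : volume (T ∩ Iic (d i))
        = volume (T ∩ Iic (r i)) + volume (T ∩ Ioc (r i) (d i)) := by
      have he : T ∩ Iic (d i) = (T ∩ Iic (r i)) ∪ (T ∩ Ioc (r i) (d i)) := by
        rw [← inter_union_distrib_left, Iic_union_Ioc_eq_Iic (hrd' i)]
      rw [he, measure_union
        (Disjoint.mono inter_subset_right inter_subset_right (Iic_disjoint_Ioc le_rfl))
        (hTmeas.inter measurableSet_Ioc)]
    have h2 : F (d i) = F (r i) + (volume (T ∩ Ioc (r i) (d i))).toReal := by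
      simp only [hF]
      rw [hsplit, ENNReal.toReal_add (hFfin _)
        (ne_top_of_le_ne_top hTne (measure_mono inter_subset_left))]
    have h3 : p i ≤ (volume (T ∩ Ioc (r i) (d i))).toReal := by
      have := ENNReal.toReal_mono
        (ne_top_of_le_ne_top hTne (measure_mono inter_subset_left)) hvol1
      rwa [ENNReal.toReal_ofReal (hp i)] at this
    linarith
  have hpa : ∀ i, p i ≤ a := by
    intro i
    have h1 : volume (S i) ≤ volume T := measure_mono (subset_iUnion S i)
    rw [(hS i).2.2, hTvol] at h1
    exact (ENNReal.ofReal_le_ofReal_iff hA.le).1 h1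
  have hn0 : (0:ℝ) < n := by
    have : (2:ℝ) ≤ n := by exact_mod_cast hn
    linarith
  set K := Nat.log 2 n with hK
  set ki : Fin n → ℕ := fun i => Nat.log 2 ⌊a / p i⌋₊ with hki
  set q : ℕ → ℝ := fun k => a / 2 ^ (k + 1) with hq
  set mi : Fin n → ℕ := fun i => ⌊F (r i) / q (ki i)⌋₊ + 1 with hmi
  set x : ℕ → ℕ → ℝ := fun k m => sInf {y | (m : ℝ) * q k ≤ F y} with hx
  have hqpos : ∀ k, 0 < q k := fun k => by
    simp only [hq]; positivity
  have hbig : ∀ i, a / n < p i →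
      r i ≤ x (ki i) (mi i) ∧ x (ki i) (mi i) ≤ d i ∧ p i ≤ a / 2 ^ (ki i) ∧
      ki i < K + 1 ∧ mi i < 2 ^ (ki i + 1) + 2 := by
    intro i hbi
    have hpi : 0 < p i := lt_of_le_of_lt (by positivity) hbi
    have h1a : 1 ≤ a / p i := (one_le_div hpi).2 (hpa i)
    have hm0 : ⌊a / p i⌋₊ ≠ 0 := by
      have : (1:ℕ) ≤ ⌊a / p i⌋₊ := Nat.le_floor (by exact_mod_cast h1a)
      omega
    have hk1 : (2:ℝ) ^ ki i ≤ a / p i := by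
      calc ((2:ℝ) ^ ki i) = ((2 ^ ki i : ℕ) : ℝ) := by push_cast; ring
        _ ≤ (⌊a / p i⌋₊ : ℝ) := by exact_mod_cast Nat.pow_log_le_self 2 hm0
        _ ≤ a / p i := Nat.floor_le (by positivity)
    have hk2 : a / p i < (2:ℝ) ^ (ki i + 1) := by
      have h1 : a / p i < ⌊a / p i⌋₊ + 1 := Nat.lt_floor_add_one _
      have h2 : ⌊a / p i⌋₊ + 1 ≤ 2 ^ (ki i + 1) :=
        Nat.lt_pow_succ_log_self (by norm_num) _
      calc a / p i < ((⌊a / p i⌋₊ : ℝ) + 1) := h1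
        _ ≤ ((2 ^ (ki i + 1) : ℕ) : ℝ) := by exact_mod_cast h2
        _ = (2:ℝ) ^ (ki i + 1) := by push_cast; ring
    have hqlt : q (ki i) < p i := by
      simp only [hq]
      rw [div_lt_iff₀ (by positivity)]
      rw [div_lt_iff₀ hpi] at hk2
      linarith [hk2]
    have hpb : p i ≤ a / 2 ^ ki i := by
      rw [le_div_iff₀ (by positivity)]
      rw [le_div_iff₀ hpi] at hk1
      linarith [hk1]
    have hrm : F (r i) < mi i * q (ki i) := by
      have h1 := Nat.lt_floor_add_one (F (r i) / q (ki i))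
      have h2 : F (r i) / q (ki i) * q (ki i) < ((⌊F (r i) / q (ki i)⌋₊ : ℝ) + 1) * q (ki i) :=
        mul_lt_mul_of_pos_right h1 (hqpos _)
      rw [div_mul_cancel₀ _ (hqpos (ki i)).ne'] at h2
      simp only [hmi]
      push_cast
      linarith
    have hdm : (mi i : ℝ) * q (ki i) ≤ F (d i) := by
      have h1 : (⌊F (r i) / q (ki i)⌋₊ : ℝ) ≤ F (r i) / q (ki i) :=
        Nat.floor_le (by positivity)
      have h2 : (mi i : ℝ) * q (ki i) ≤ F (r i) + q (ki i) := by
        simp only [hmi]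
        push_cast
        have h3 : (⌊F (r i) / q (ki i)⌋₊ : ℝ) * q (ki i) ≤ F (r i) := by
          have h4 := mul_le_mul_of_nonneg_right h1 (hqpos (ki i)).le
          rwa [div_mul_cancel₀ _ (hqpos (ki i)).ne'] at h4
        rw [add_mul, one_mul]
        linarith
      linarith [hFstep i, hqlt]
    have hXlb : ∀ y ∈ {y | (mi i : ℝ) * q (ki i) ≤ F y}, r i ≤ y := by
      intro y hy
      by_contra hlt
      push_neg at hlt
      have := hFmono hlt.le
      have : (mi i : ℝ) * q (ki i) ≤ F (r i) := le_trans hy this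
      linarith
    have hXne : d i ∈ {y | (mi i : ℝ) * q (ki i) ≤ F y} := hdm
    refine ⟨le_csInf ⟨_, hXne⟩ hXlb, csInf_le ⟨r i, hXlb⟩ hXne, hpb, ?_, ?_⟩
    · have hapn : a / p i < n := by
        rw [div_lt_iff₀ hpi]
        rw [div_lt_iff₀ hn0] at hbi
        linarith
      have h2n : (2:ℕ) ^ ki i ≤ n := by
        have : (2:ℝ) ^ ki i < n := lt_of_le_of_lt hk1 hapn
        have : ((2 ^ ki i : ℕ) : ℝ) < (n : ℝ) := by push_cast; linarith
        exact_mod_cast this.le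
      have := (Nat.le_log_iff_pow_le one_lt_two (by omega)).2 h2n
      omega
    · have h1 : (⌊F (r i) / q (ki i)⌋₊ : ℝ) ≤ 2 ^ (ki i + 1) := by
        calc (⌊F (r i) / q (ki i)⌋₊ : ℝ) ≤ F (r i) / q (ki i) := Nat.floor_le (by positivity)
          _ ≤ a / q (ki i) := by
              exact div_le_div_of_nonneg_right (hFle _) (hqpos _).le
          _ = 2 ^ (ki i + 1) := by
              simp only [hq]
              field_simp
      have h2 : (mi i : ℝ) ≤ 2 ^ (ki i + 1) + 1 := by
        simp only [hmi]; push_cast; linarith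
      have h3 : mi i ≤ 2 ^ (ki i + 1) + 1 := by
        have : ((mi i : ℕ) : ℝ) ≤ ((2 ^ (ki i + 1) + 1 : ℕ) : ℝ) := by push_cast; linarith
        exact_mod_cast this
      omega
  set s : Fin n → ℝ := fun i =>
    if p i ≤ a / n then r i else max (r i) (x (ki i) (mi i) - p i) with hs
  have hfeas : PathNPFeasible r d p s := by
    intro i
    simp only [hs]
    by_cases hsm : p i ≤ a / n
    · simp only [if_pos hsm]
      exact ⟨le_rfl, hrd i⟩
    · simp only [if_neg hsm]
      push_neg at hsm
      obtain ⟨hr_x, hx_d, _, _, _⟩ := hbig i hsm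
      refine ⟨le_max_left _ _, ?_⟩
      rw [← max_add_add_right]
      exact max_le (hrd i) (by linarith)
  set E : Fin n → Set ℝ := fun i =>
    if p i ≤ a / n then Icc (r i) (r i + p i) else ∅ with hE
  set C : Set ℝ := ⋃ k ∈ Finset.range (K+1), ⋃ m ∈ Finset.range (2^(k+1)+2),
    Icc (x k m - a / 2 ^ k) (x k m + a / 2 ^ k) with hC
  have hcover : (⋃ i, Icc (s i) (s i + p i)) ⊆ (⋃ i, E i) ∪ C := by
    refine iUnion_subset fun i => ?_
    by_cases hsm : p i ≤ a / n
    · intro y hy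
      left
      refine mem_iUnion.2 ⟨i, ?_⟩
      simp only [hE, if_pos hsm]
      simpa only [hs, if_pos hsm] using hy
    · push_neg at hsm
      obtain ⟨hr_x, hx_d, hpb, hkK, hmB⟩ := hbig i hsm
      intro y hy
      right
      simp only [hs, if_neg (not_le.2 hsm)] at hy
      have hy' : y ∈ Icc (x (ki i) (mi i) - a / 2 ^ ki i)
          (x (ki i) (mi i) + a / 2 ^ ki i) := by
        constructor
        · calc x (ki i) (mi i) - a / 2 ^ ki i ≤ x (ki i) (mi i) - p i := by linarith
            _ ≤ max (r i) (x (ki i) (mi i) - p i) := le_max_right _ _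
            _ ≤ y := hy.1
        · have hsx : max (r i) (x (ki i) (mi i) - p i) ≤ x (ki i) (mi i) :=
            max_le hr_x (by linarith [hp i])
          calc y ≤ max (r i) (x (ki i) (mi i) - p i) + p i := hy.2
            _ ≤ x (ki i) (mi i) + p i := by linarith
            _ ≤ x (ki i) (mi i) + a / 2 ^ ki i := by linarith
      exact mem_biUnion (Finset.mem_range.2 hkK) (mem_biUnion (Finset.mem_range.2 hmB) hy')
  have hvolE : volume (⋃ i, E i) ≤ ENNReal.ofReal a := by
    have h1 : ∀ i : Fin n, volume (E i) ≤ ENNReal.ofReal (a / n) := by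
      intro i
      simp only [hE]
      by_cases hsm : p i ≤ a / n
      · simp only [if_pos hsm, Real.volume_Icc, add_sub_cancel_left]
        exact ENNReal.ofReal_le_ofReal hsm
      · simp only [if_neg hsm, measure_empty]
        exact zero_le
    calc volume (⋃ i, E i) ≤ ∑' i, volume (E i) := measure_iUnion_le _
      _ ≤ ∑' _i : Fin n, ENNReal.ofReal (a / n) := ENNReal.tsum_le_tsum h1
      _ = (n : ℝ≥0∞) * ENNReal.ofReal (a / n) := by
          rw [tsum_fintype]
          simp [Finset.sum_const, Finset.card_univ, nsmul_eq_mul]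
      _ = ENNReal.ofReal a := by
          rw [← ENNReal.ofReal_natCast n, ← ENNReal.ofReal_mul (by positivity)]
          rw [mul_div_cancel₀ _ hn0.ne']
  have hvolC : volume C ≤ ENNReal.ofReal (8 * a * (K + 1)) := by
    have hinner : ∀ k : ℕ, volume (⋃ m ∈ Finset.range (2^(k+1)+2),
        Icc (x k m - a / 2 ^ k) (x k m + a / 2 ^ k)) ≤ ENNReal.ofReal (8 * a) := by
      intro k
      have h2k : (0:ℝ) < 2 ^ k := by positivity
      have h2k1 : (1:ℝ) ≤ 2 ^ k := one_le_pow₀ one_le_two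
      calc volume (⋃ m ∈ Finset.range (2^(k+1)+2),
            Icc (x k m - a / 2 ^ k) (x k m + a / 2 ^ k))
          ≤ ∑ m ∈ Finset.range (2^(k+1)+2),
            volume (Icc (x k m - a / 2 ^ k) (x k m + a / 2 ^ k)) :=
            measure_biUnion_finset_le _ _
        _ = ∑ _m ∈ Finset.range (2^(k+1)+2), ENNReal.ofReal (2 * (a / 2 ^ k)) := by
            refine Finset.sum_congr rfl fun m _ => ?_
            rw [Real.volume_Icc]
            ring_nf
        _ = ((2^(k+1)+2 : ℕ) : ℝ≥0∞) * ENNReal.ofReal (2 * (a / 2 ^ k)) := by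
            rw [Finset.sum_const, Finset.card_range, nsmul_eq_mul]
        _ = ENNReal.ofReal (((2^(k+1)+2 : ℕ) : ℝ) * (2 * (a / 2 ^ k))) := by
            rw [← ENNReal.ofReal_natCast, ← ENNReal.ofReal_mul (by positivity)]
        _ ≤ ENNReal.ofReal (8 * a) := by
            apply ENNReal.ofReal_le_ofReal
            have he : ((2^(k+1)+2 : ℕ) : ℝ) * (2 * (a / 2 ^ k)) = 4 * a + 4 * (a / 2 ^ k) := by
              push_cast
              rw [pow_succ]
              field_simp
              ring
            rw [he]
            have : a / 2 ^ k ≤ a := by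
              rw [div_le_iff₀ h2k]
              nlinarith [hA.le]
            linarith
    calc volume C ≤ ∑ k ∈ Finset.range (K+1), volume (⋃ m ∈ Finset.range (2^(k+1)+2),
          Icc (x k m - a / 2 ^ k) (x k m + a / 2 ^ k)) := measure_biUnion_finset_le _ _
      _ ≤ ∑ _k ∈ Finset.range (K+1), ENNReal.ofReal (8 * a) :=
          Finset.sum_le_sum fun k _ => hinner k
      _ = ((K+1 : ℕ) : ℝ≥0∞) * ENNReal.ofReal (8 * a) := by
          rw [Finset.sum_const, Finset.card_range, nsmul_eq_mul]
      _ = ENNReal.ofReal (8 * a * (K + 1)) := by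
          rw [← ENNReal.ofReal_natCast, ← ENNReal.ofReal_mul (by positivity)]
          push_cast
          ring_nf
  have hfinal : a + 8 * a * (K + 1) ≤ 40 * a * Real.log n := by
    have hlog2 : (0.6931471803 : ℝ) < Real.log 2 := Real.log_two_gt_d9
    have hKlog : (K:ℝ) * Real.log 2 ≤ Real.log n := by
      have h2K : (2:ℕ)^K ≤ n := Nat.pow_log_le_self 2 (by omega)
      calc (K:ℝ) * Real.log 2 = Real.log (2^K) := by rw [Real.log_pow]
        _ ≤ Real.log n := by
            apply Real.log_le_log (by positivity)
            exact_mod_cast h2K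
    have hlogn : Real.log 2 ≤ Real.log n := by
      apply Real.log_le_log two_pos
      exact_mod_cast hn
    have hKn : (0:ℝ) ≤ K := Nat.cast_nonneg K
    have hprod : (0:ℝ) ≤ (K:ℝ) * (Real.log 2 - 0.6931471803) :=
      mul_nonneg hKn (by linarith)
    have hlin : 9 + 8*(K:ℝ) ≤ 40 * Real.log n := by nlinarith [hKlog, hlogn, hlog2, hprod]
    nlinarith [mul_le_mul_of_nonneg_left hlin hA.le]
  refine ⟨s, hfeas, ?_⟩
  show volume (⋃ i, Icc (s i) (s i + p i)) ≤ _
  calc volume (⋃ i, Icc (s i) (s i + p i)) ≤ volume ((⋃ i, E i) ∪ C) :=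
        measure_mono hcover
    _ ≤ volume (⋃ i, E i) + volume C := measure_union_le _ _
    _ ≤ ENNReal.ofReal a + ENNReal.ofReal (8 * a * (K + 1)) := add_le_add hvolE hvolC
    _ = ENNReal.ofReal (a + 8 * a * (K+1)) := (ENNReal.ofReal_add hA.le (by positivity)).symm
    _ ≤ ENNReal.ofReal (40 * a * Real.log n) := ENNReal.ofReal_le_ofReal hfinal


namespace PowerPreemptAux


def pbase (t : ℕ) : ℕ := ∑ s ∈ Finset.Ico 1 t, 4 ^ s

lemma pbase_succ {t : ℕ} (ht : 1 ≤ t) : pbase (t+1) = pbase t + 4 ^ t :=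
  Finset.sum_Ico_succ_top ht _

lemma pbase_mono : Monotone pbase := fun _ _ hab =>
  Finset.sum_le_sum_of_subset (Finset.Ico_subset_Ico le_rfl hab)

lemma pbase_one : pbase 1 = 0 := by simp [pbase]

lemma three_pbase : ∀ {t : ℕ}, 1 ≤ t → 3 * pbase t + 4 = 4 ^ t := by
  intro t
  induction t with
  | zero => omega
  | succ u ih =>
    intro _
    rcases Nat.eq_zero_or_pos u with hu | hu
    · subst hu; simp [pbase_one]
    · rw [pbase_succ hu]
      have := ih hu
      ring_nf
      ring_nf at this
      omega

lemma lt_pbase_succ_self (i : ℕ) : i < pbase (i + 2) := by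
  have h1 : 3 * pbase (i+2) + 4 = 4 ^ (i+2) := three_pbase (by omega)
  have h2 : i < 4 ^ i := Nat.lt_pow_self (by norm_num)
  have h3 : 4 ^ (i+2) = 16 * 4 ^ i := by ring
  omega

lemma plvl_ex (i : ℕ) : ∃ t, i < pbase (t + 1) := ⟨i + 1, lt_pbase_succ_self i⟩

def plvl (i : ℕ) : ℕ := Nat.find (plvl_ex i)

lemma plvl_spec (i : ℕ) : i < pbase (plvl i + 1) := Nat.find_spec (plvl_ex i)

lemma plvl_pos (i : ℕ) : 1 ≤ plvl i := by
  by_contra h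
  have h0 : plvl i = 0 := by omega
  have := plvl_spec i
  rw [h0, pbase_one] at this
  omega

lemma pbase_plvl_le (i : ℕ) : pbase (plvl i) ≤ i := by
  have h1 := plvl_pos i
  have h2 : ¬ i < pbase ((plvl i - 1) + 1) :=
    Nat.find_min (plvl_ex i) (show plvl i - 1 < plvl i by omega)
  have h3 : plvl i - 1 + 1 = plvl i := by omega
  rw [h3] at h2
  omega

lemma plvl_eq {t j : ℕ} (ht : 1 ≤ t) (hj : j < 4^t) : plvl (pbase t + j) = t := by
  have hle : plvl (pbase t + j) ≤ t := by
    apply Nat.find_min'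
    rw [pbase_succ ht]
    omega
  have hge : t ≤ plvl (pbase t + j) := by
    by_contra h
    push_neg at h
    have h1 := plvl_spec (pbase t + j)
    have h2 : pbase (plvl (pbase t + j) + 1) ≤ pbase t := pbase_mono (by omega)
    omega
  omega

lemma off_eq {t j : ℕ} (ht : 1 ≤ t) (hj : j < 4^t) :
    pbase t + j - pbase (plvl (pbase t + j)) = j := by
  rw [plvl_eq ht hj]; omega

/-- Counting lemma: intervals of measure at most `ε·c` sitting in disjoint windows
`[idx i · c, (idx i + 1) · c]` can intersect a fixed interval of length `L` in total
measure at most `ε L + 2 ε c`. -/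
lemma sum_inter_le (G : Finset ℕ) (idx : ℕ → ℕ) (hinj : Set.InjOn idx G)
    (c ε α L : ℝ) (hc : 0 < c) (hε : 0 ≤ ε) (hα : 0 ≤ α) (hL : 0 ≤ L)
    (I : ℕ → Set ℝ)
    (hI : ∀ i ∈ G, I i ⊆ Icc ((idx i : ℝ)*c) (((idx i : ℝ)+1)*c))
    (hIv : ∀ i ∈ G, volume (I i) ≤ ENNReal.ofReal (ε * c)) :
    ∑ i ∈ G, volume (I i ∩ Icc α (α + L)) ≤ ENNReal.ofReal (ε * L + 2 * (ε * c)) := by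
  classical
  set G' := G.filter (fun i => (idx i : ℝ)*c ≤ α + L ∧ α ≤ ((idx i : ℝ)+1)*c) with hG'
  have hzero : ∀ i ∈ G, i ∉ G' → volume (I i ∩ Icc α (α + L)) = 0 := by
    intro i hi hni
    have hcond : ¬((idx i : ℝ)*c ≤ α + L ∧ α ≤ ((idx i : ℝ)+1)*c) := by
      intro hcon
      exact hni (Finset.mem_filter.2 ⟨hi, hcon⟩)
    have : I i ∩ Icc α (α + L) = ∅ := by
      rw [eq_empty_iff_forall_notMem]
      intro y hy
      have h1 := hI i hi hy.1
      have h2 := hy.2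
      rw [mem_Icc] at h1 h2
      apply hcond
      constructor <;> linarith [h1.1, h1.2, h2.1, h2.2]
    rw [this, measure_empty]
  have hsum : ∑ i ∈ G, volume (I i ∩ Icc α (α + L))
      = ∑ i ∈ G', volume (I i ∩ Icc α (α + L)) := by
    symm
    apply Finset.sum_subset (Finset.filter_subset _ _)
    exact hzero
  rw [hsum]
  have hcard : (G'.card : ℝ) ≤ L / c + 2 := by
    set b := ⌊(α + L) / c⌋₊ with hb
    set aN := ⌈α / c⌉₊ - 1 with haN
    have hsub : G' ⊆ G'.filter (fun i => True) := by simp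
    have himg : (G'.image idx) ⊆ Finset.Icc aN b := by
      intro m hm
      rw [Finset.mem_image] at hm
      obtain ⟨i, hi, rfl⟩ := hm
      have hcond := (Finset.mem_filter.1 hi).2
      rw [Finset.mem_Icc]
      constructor
      · -- aN ≤ idx i
        have h1 : α ≤ ((idx i : ℝ)+1)*c := hcond.2
        have h2 : α / c ≤ (idx i : ℝ) + 1 := by
          rw [div_le_iff₀ hc]; linarith [mul_comm ((idx i : ℝ)+1) c]
        have h3 : ⌈α / c⌉₊ ≤ idx i + 1 := by
          apply Nat.ceil_le.2
          push_cast
          linarith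
        omega
      · -- idx i ≤ b
        have h1 : (idx i : ℝ)*c ≤ α + L := hcond.1
        have h2 : (idx i : ℝ) ≤ (α + L) / c := by
          rw [le_div_iff₀ hc]; linarith
        exact Nat.le_floor h2
    have hcardeq : G'.card = (G'.image idx).card := by
      symm
      apply Finset.card_image_of_injOn
      intro x hx y hy hxy
      exact hinj (Finset.filter_subset _ _ hx) (Finset.filter_subset _ _ hy) hxy
    have h1 : G'.card ≤ (Finset.Icc aN b).card := by
      rw [hcardeq]
      exact Finset.card_le_card himg
    rw [Nat.card_Icc] at h1
    have h2 : (G'.card : ℝ) ≤ (b + 1 - aN : ℕ) := by exact_mod_cast h1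
    have h3 : ((b + 1 - aN : ℕ) : ℝ) ≤ (b : ℝ) + 1 - (aN : ℝ) ∨ b + 1 < aN := by
      rcases le_or_gt aN (b+1) with h | h
      · left
        rw [Nat.cast_sub h]
        push_cast
        ring_nf
        exact le_rfl
      · right; exact h
    have hble : (b : ℝ) ≤ (α + L) / c := Nat.floor_le (by positivity)
    have haNge : α / c - 1 ≤ (aN : ℝ) := by
      rcases Nat.eq_zero_or_pos ⌈α / c⌉₊ with h0 | h0
      · have : α / c ≤ 0 := by
          by_contra hcon
          push_neg at hcon
          have := Nat.ceil_pos.2 hcon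
          omega
        have : aN = 0 := by omega
        rw [this]
        simp
        linarith [div_nonneg hα hc.le]
      · have : (aN : ℝ) = (⌈α / c⌉₊ : ℝ) - 1 := by
          rw [haN, Nat.cast_sub h0]
          simp
        rw [this]
        linarith [Nat.le_ceil (α / c)]
    rcases h3 with h3 | h3
    · calc (G'.card : ℝ) ≤ ((b + 1 - aN : ℕ) : ℝ) := h2
        _ ≤ (b : ℝ) + 1 - (aN : ℝ) := h3
        _ ≤ (α + L)/c + 1 - (α/c - 1) := by linarith
        _ = L / c + 2 := by field_simp; ring
    · -- Icc empty, card = 0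
      have hz : (b + 1 - aN : ℕ) = 0 := by omega
      have hc0 : G'.card = 0 := by omega
      rw [hc0]
      norm_num
      positivity
  calc ∑ i ∈ G', volume (I i ∩ Icc α (α + L))
      ≤ ∑ i ∈ G', ENNReal.ofReal (ε * c) := by
        apply Finset.sum_le_sum
        intro i hi
        exact le_trans (measure_mono inter_subset_left) (hIv i (Finset.filter_subset _ _ hi))
    _ = (G'.card : ℝ≥0∞) * ENNReal.ofReal (ε * c) := by
        rw [Finset.sum_const, nsmul_eq_mul]
    _ = ENNReal.ofReal ((G'.card : ℝ) * (ε * c)) := by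
        rw [← ENNReal.ofReal_natCast, ← ENNReal.ofReal_mul (by positivity)]
    _ ≤ ENNReal.ofReal (ε * L + 2 * (ε * c)) := by
        apply ENNReal.ofReal_le_ofReal
        have h1 : (G'.card : ℝ) * (ε * c) ≤ (L / c + 2) * (ε * c) :=
          mul_le_mul_of_nonneg_right hcard (by positivity)
        have h2 : (L / c + 2) * (ε * c) = ε * L + 2 * (ε * c) := by
          field_simp
        linarith


lemma Icc_disj {a b c d : ℝ} (h : b < c) : Disjoint (Icc a b) (Icc c d) := by
  rw [Set.disjoint_left]
  rintro x ⟨_, h1⟩ ⟨h2, _⟩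
  linarith

set_option maxHeartbeats 1000000 in
lemma part_two (n : ℕ) (hn : 3 ≤ n) :
    ∃ (r d p : Fin n → ℝ) (P : ℝ), 0 < P ∧
      (∀ i, 0 ≤ p i) ∧ (∀ i, r i + p i ≤ d i) ∧
      (∃ S : Fin n → Set ℝ, PathPFeasible r d p S ∧ pBusy S = ENNReal.ofReal P) ∧
      ∀ s : Fin n → ℝ, PathNPFeasible r d p s →
        ENNReal.ofReal ((1/60) * P * Real.log n) ≤ npBusy p s := by
  haveI : Nonempty (Fin n) := ⟨⟨0, by omega⟩⟩
  by_cases hsmall : n < 16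
  · -- rigid instance: all jobs are [0,1] with p = 1
    refine ⟨fun _ => 0, fun _ => 1, fun _ => 1, 1, one_pos, fun _ => zero_le_one,
      fun _ => by norm_num, ?_, ?_⟩
    · refine ⟨fun _ => Icc 0 1, fun i => ⟨measurableSet_Icc, subset_rfl, ?_⟩, ?_⟩
      · rw [Real.volume_Icc]; norm_num
      · show volume (⋃ _i : Fin n, Icc (0:ℝ) 1) = _
        rw [iUnion_const, Real.volume_Icc]; norm_num
    · intro s _
      have i0 : Fin n := ⟨0, by omega⟩
      calc ENNReal.ofReal ((1/60) * 1 * Real.log n) ≤ ENNReal.ofReal 1 := by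
            apply ENNReal.ofReal_le_ofReal
            have hlog : Real.log n ≤ (n:ℝ) - 1 := Real.log_le_sub_one_of_pos (by positivity)
            have h16 : (n:ℝ) ≤ 16 := by exact_mod_cast (by omega : n ≤ 16)
            linarith
        _ = volume (Icc (s i0) (s i0 + 1)) := by rw [Real.volume_Icc]; norm_num
        _ ≤ npBusy (fun _ => 1) s := measure_mono (subset_iUnion (fun i => Icc (s i) (s i + 1)) i0)
  -- main construction
  push_neg at hsmall
  have hn0 : n ≠ 0 := by omega
  set k := Nat.log 4 n with hk
  have hk2 : 2 ≤ k := by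
    have h16 : (4:ℕ)^2 ≤ n := by norm_num; omega
    exact (Nat.le_log_iff_pow_le (by norm_num) hn0).2 h16
  set T := k - 1 with hT
  have hT1 : 1 ≤ T := by omega
  have hTk : T + 1 = k := by omega
  have h4k : 4 ^ (T+1) ≤ n := by rw [hTk]; exact Nat.pow_log_le_self 4 hn0
  have hbn : pbase (T+1) ≤ n := by
    have h1 := three_pbase (show 1 ≤ T+1 by omega)
    omega
  have hTr : (1:ℝ) ≤ (T:ℝ) := by exact_mod_cast hT1
  set ε : ℝ := 1 / (6 * T) with hε
  have hεpos : 0 < ε := by rw [hε]; positivity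
  have hεT : ε * T = 1/6 := by rw [hε]; field_simp
  have hε1 : ε ≤ 1/6 := by
    rw [hε, div_le_iff₀ (by positivity)]
    linarith
  set N := 4 ^ T with hN
  have hNpos : 0 < N := Nat.pow_pos (n := T) (by norm_num)
  have hNr : (0:ℝ) < (N:ℝ) := by exact_mod_cast hNpos
  -- the jobs
  set w : ℕ → ℝ := fun i => ((4:ℝ) ^ plvl i)⁻¹ with hwdef
  have hwpos : ∀ i, 0 < w i := fun i => by simp only [hwdef]; positivity
  set off : ℕ → ℕ := fun i => i - pbase (plvl i) with hoff
  set r0 : ℕ → ℝ := fun i => if i < pbase (T+1) then (off i : ℝ) * w i else 0 with hr0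
  set d0 : ℕ → ℝ := fun i => if i < pbase (T+1) then ((off i : ℝ) + 1) * w i else 0 with hd0
  set p0 : ℕ → ℝ := fun i => if i < pbase (T+1) then ε * w i else 0 with hp0
  have hfacts : ∀ i, i < pbase (T+1) → 1 ≤ plvl i ∧ plvl i ≤ T ∧ off i < 4 ^ plvl i := by
    intro i hi
    have hlvT : plvl i ≤ T := by
      by_contra h
      push_neg at h
      have h1 := pbase_mono (show T+1 ≤ plvl i by omega)
      have h2 := pbase_plvl_le i
      omega
    refine ⟨plvl_pos i, hlvT, ?_⟩
    have h1 := plvl_spec i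
    rw [pbase_succ (plvl_pos i)] at h1
    have h2 := pbase_plvl_le i
    simp only [hoff]
    omega
  have hpow2 : ∀ t : ℕ, t ≤ T → ((4 ^ (T - t) : ℕ) : ℝ) / (N:ℝ) = ((4:ℝ)^t)⁻¹ := by
    intro t ht
    have h1 : (4:ℝ)^(T - t) * (4:ℝ)^t = (4:ℝ)^T := pow_sub_mul_pow 4 ht
    have hNc : (N:ℝ) = (4:ℝ)^T := by rw [hN]; push_cast; ring
    rw [hNc]
    push_cast
    rw [← h1]
    have h4t : (0:ℝ) < (4:ℝ)^t := by positivity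
    field_simp
  -- the preemptive schedule
  set grid : ℕ → Set ℝ := fun q => Icc ((q:ℝ)/N) (((q:ℝ)+ε)/N) with hgrid
  have hgdisj : ∀ q q' : ℕ, q ≠ q' → Disjoint (grid q) (grid q') := by
    have key : ∀ q q' : ℕ, q < q' → Disjoint (grid q) (grid q') := by
      intro q q' h
      apply Icc_disj
      have hc : (q:ℝ) + 1 ≤ (q':ℝ) := by exact_mod_cast h
      have : (q:ℝ) + ε < (q':ℝ) := by linarith
      exact div_lt_div_of_pos_right this hNr
    intro q q' hqq
    rcases Nat.lt_or_ge q q' with h | h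
    · exact key q q' h
    · exact (key q' q (by omega)).symm
  have hgvol : ∀ q : ℕ, volume (grid q) = ENNReal.ofReal (ε / N) := by
    intro q
    simp only [hgrid]
    rw [Real.volume_Icc]
    congr 1
    ring
  have hgAvol : ∀ A : Finset ℕ, volume (⋃ q ∈ A, grid q)
      = (A.card : ℝ≥0∞) * ENNReal.ofReal (ε / N) := by
    intro A
    rw [measure_biUnion_finset (fun q _ q' _ hqq => hgdisj q q' hqq)
      (fun q _ => measurableSet_Icc)]
    rw [Finset.sum_congr rfl (fun q _ => hgvol q), Finset.sum_const, nsmul_eq_mul]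
  set S0 : ℕ → Set ℝ := fun i => if i < pbase (T+1) then
      ⋃ q ∈ Finset.Ico (off i * 4^(T - plvl i)) ((off i + 1) * 4^(T - plvl i)), grid q
    else ∅ with hS0
  have hS0meas : ∀ i, MeasurableSet (S0 i) := by
    intro i
    simp only [hS0]
    split_ifs
    · exact (Finset.Ico _ _).measurableSet_biUnion (fun q _ => measurableSet_Icc)
    · exact MeasurableSet.empty
  have hS0sub : ∀ i, i < pbase (T+1) → S0 i ⊆ Icc (r0 i) (d0 i) := by
    intro i hi
    obtain ⟨hl1, hlT, hoffb⟩ := hfacts i hi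
    simp only [hS0, if_pos hi]
    refine iUnion₂_subset fun q hq => ?_
    rw [Finset.mem_Ico] at hq
    intro y hy
    simp only [hgrid, mem_Icc] at hy
    have hmN : ((4 ^ (T - plvl i) : ℕ) : ℝ) / (N:ℝ) = w i := by
      rw [hpow2 (plvl i) hlT]
    constructor
    · simp only [hr0, if_pos hi]
      have h1 : ((off i * 4^(T - plvl i) : ℕ) : ℝ) / N ≤ (q:ℝ) / N := by
        apply div_le_div_of_nonneg_right ?_ hNr.le
        · exact_mod_cast hq.1
      have h2 : ((off i * 4^(T - plvl i) : ℕ) : ℝ) / N = (off i : ℝ) * w i := by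
        push_cast
        rw [mul_div_assoc]
        congr 1
        rw [← hmN]
        push_cast
        ring
      linarith [hy.1]
    · simp only [hd0, if_pos hi]
      have h1 : (q:ℝ) + ε ≤ ((off i + 1) * 4^(T - plvl i) : ℕ) := by
        have hq2 : q + 1 ≤ (off i + 1) * 4^(T - plvl i) := hq.2
        have : (q:ℝ) + 1 ≤ ((off i + 1) * 4^(T - plvl i) : ℕ) := by exact_mod_cast hq2
        linarith
      have h2 : (((off i + 1) * 4^(T - plvl i) : ℕ) : ℝ) / N = ((off i : ℝ) + 1) * w i := by
        push_cast
        rw [mul_div_assoc]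
        congr 1
        rw [← hmN]
        push_cast
        ring
      have h3 : ((q:ℝ) + ε) / N ≤ (((off i + 1) * 4^(T - plvl i) : ℕ) : ℝ) / N :=
        div_le_div_of_nonneg_right h1 hNr.le
      linarith [hy.2]
  have hS0vol : ∀ i, i < pbase (T+1) → volume (S0 i) = ENNReal.ofReal (p0 i) := by
    intro i hi
    obtain ⟨hl1, hlT, hoffb⟩ := hfacts i hi
    simp only [hS0, if_pos hi]
    rw [hgAvol]
    rw [Nat.card_Ico]
    have hcard : (off i + 1) * 4^(T - plvl i) - off i * 4^(T - plvl i) = 4^(T - plvl i) := by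
      rw [add_mul, one_mul]
      exact Nat.add_sub_cancel_left _ _
    rw [hcard]
    rw [← ENNReal.ofReal_natCast, ← ENNReal.ofReal_mul (by positivity)]
    simp only [hp0, if_pos hi]
    congr 1
    rw [div_eq_mul_inv ε, ← mul_assoc]
    rw [show ((4 ^ (T - plvl i) : ℕ) : ℝ) * ε = ε * ((4 ^ (T - plvl i) : ℕ) : ℝ) from mul_comm _ _]
    rw [mul_assoc, ← div_eq_mul_inv (((4 ^ (T - plvl i) : ℕ) : ℝ)) ((N:ℝ))]
    rw [hpow2 (plvl i) hlT]
  -- provide the instance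
  refine ⟨fun i => r0 i.val, fun i => d0 i.val, fun i => p0 i.val, ε, hεpos, ?_, ?_, ?_, ?_⟩
  · intro i
    simp only [hp0]
    split_ifs with h
    · exact mul_nonneg hεpos.le (hwpos _).le
    · exact le_rfl
  · intro i
    simp only [hr0, hp0, hd0]
    split_ifs with h
    · have hw := hwpos i.val
      nlinarith [hε1]
    · norm_num
  · refine ⟨fun i => S0 i.val, ?_, ?_⟩
    · intro i
      refine ⟨hS0meas i.val, ?_, ?_⟩
      · by_cases h : i.val < pbase (T+1)
        · exact hS0sub i.val h
        · simp only [hS0, if_neg h]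
          exact empty_subset _
      · by_cases h : i.val < pbase (T+1)
        · exact hS0vol i.val h
        · simp only [hS0, hp0, if_neg h]
          simp
    · show volume (⋃ i : Fin n, S0 i.val) = ENNReal.ofReal ε
      have hUeq : (⋃ i : Fin n, S0 i.val) = ⋃ q ∈ Finset.range N, grid q := by
        apply subset_antisymm
        · refine iUnion_subset fun i => ?_
          simp only [hS0]
          split_ifs with h
          · refine iUnion₂_subset fun q hq => ?_
            rw [Finset.mem_Ico] at hq
            obtain ⟨hl1, hlT, hoffb⟩ := hfacts i.val h
            have hqN : q < N := by
              have h1 : (off i.val + 1) * 4 ^ (T - plvl i.val)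
                  ≤ 4 ^ plvl i.val * 4 ^ (T - plvl i.val) :=
                Nat.mul_le_mul_right _ (by omega)
              have h2 : 4 ^ plvl i.val * 4 ^ (T - plvl i.val) = N := by
                rw [hN, ← pow_add]
                congr 1
                omega
              omega
            exact subset_biUnion_of_mem (Finset.mem_range.2 hqN)
          · exact empty_subset _
        · refine iUnion₂_subset fun q hq => ?_
          rw [Finset.mem_range] at hq
          have hidx : pbase T + q < pbase (T+1) := by
            rw [pbase_succ hT1]
            omega
          have hidxn : pbase T + q < n := by omega
          have hlv : plvl (pbase T + q) = T := plvl_eq hT1 hq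
          have hof : off (pbase T + q) = q := by
            simp only [hoff, hlv]
            omega
          refine subset_trans ?_ (subset_iUnion (fun i : Fin n => S0 i.val) ⟨pbase T + q, hidxn⟩)
          simp only [hS0, if_pos hidx, hlv, hof]
          have hTT : T - T = 0 := by omega
          rw [hTT, pow_zero, mul_one, mul_one]
          intro y hy
          exact mem_iUnion₂.mpr ⟨q, Finset.mem_Ico.mpr ⟨le_rfl, Nat.lt_succ_self q⟩, hy⟩
      rw [hUeq, hgAvol, Finset.card_range]
      rw [← ENNReal.ofReal_natCast, ← ENNReal.ofReal_mul (by positivity)]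
      congr 1
      field_simp
  -- NP lower bound
  intro s hs
  classical
  set I : ℕ → Set ℝ := fun i => if h : i < n then Icc (s ⟨i,h⟩) (s ⟨i,h⟩ + p0 i) else ∅ with hI
  have hImeas : ∀ i, MeasurableSet (I i) := by
    intro i
    simp only [hI]
    split_ifs
    exacts [measurableSet_Icc, MeasurableSet.empty]
  have hIint : ∀ i, ∀ hi : i < pbase (T+1), I i = Icc (s ⟨i, by omega⟩)
      (s ⟨i, by omega⟩ + ε * w i) := by
    intro i hi
    have hin : i < n := by omega
    simp only [hI, dif_pos hin, hp0, if_pos hi]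
  have hIsub : ∀ i, i < pbase (T+1) →
      I i ⊆ Icc ((off i : ℝ) * w i) (((off i : ℝ) + 1) * w i) := by
    intro i hi
    have hin : i < n := by omega
    have hfeas := hs ⟨i, hin⟩
    rw [hIint i hi]
    apply Icc_subset_Icc
    · have h1 := hfeas.1
      simp only [hr0, if_pos hi] at h1
      exact h1
    · have h2 := hfeas.2
      simp only [hd0, hp0, if_pos hi] at h2
      exact h2
  have hIvol : ∀ i, ∀ hi : i < pbase (T+1), volume (I i) = ENNReal.ofReal (ε * w i) := by
    intro i hi
    rw [hIint i hi, Real.volume_Icc, add_sub_cancel_left]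
  have hsnn : ∀ i, ∀ hin : i < n, i < pbase (T+1) → 0 ≤ s ⟨i, hin⟩ := by
    intro i hin hi
    have h1 := (hs ⟨i, hin⟩).1
    have h2 : (0:ℝ) ≤ r0 i := by
      simp only [hr0, if_pos hi]
      exact mul_nonneg (Nat.cast_nonneg _) (hwpos _).le
    exact le_trans h2 h1
  set U : ℕ → Set ℝ := fun t => ⋃ i ∈ Finset.range (pbase (t+1)), I i with hU
  have hUmeas : ∀ t, MeasurableSet (U t) :=
    fun t => (Finset.range _).measurableSet_biUnion (fun i _ => hImeas i)
  have hsumw : ∀ u : ℕ, ∑ i ∈ Finset.range (pbase (u+1)), w i = u := by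
    intro u
    induction u with
    | zero => simp [pbase_one]
    | succ u ih =>
      rw [Finset.range_eq_Ico, ← Finset.sum_Ico_consecutive _ (Nat.zero_le (pbase (u+1)))
        (pbase_mono (by omega : u+1 ≤ u+2)), ← Finset.range_eq_Ico, ih]
      have hin : ∑ i ∈ Finset.Ico (pbase (u+1)) (pbase (u+2)), w i = 1 := by
        have hconst : ∀ i ∈ Finset.Ico (pbase (u+1)) (pbase (u+2)), w i = ((4:ℝ)^(u+1))⁻¹ := by
          intro i hi
          rw [Finset.mem_Ico] at hi
          have hjb : i - pbase (u+1) < 4^(u+1) := by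
            have hps : pbase (u+2) = pbase (u+1) + 4^(u+1) := pbase_succ (by omega)
            generalize hm : (4:ℕ)^(u+1) = m at hps ⊢
            omega
          have hrep : pbase (u+1) + (i - pbase (u+1)) = i := by omega
          have hlv : plvl i = u + 1 := by
            rw [← hrep]
            exact plvl_eq (by omega) hjb
          simp only [hwdef, hlv]
        rw [Finset.sum_congr rfl hconst, Finset.sum_const, Nat.card_Ico]
        have hcard : pbase (u+2) - pbase (u+1) = 4^(u+1) := by
          have hps : pbase (u+2) = pbase (u+1) + 4^(u+1) := pbase_succ (by omega)
          generalize hm : (4:ℕ)^(u+1) = m at hps ⊢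
          omega
        rw [hcard, nsmul_eq_mul]
        push_cast
        field_simp
      rw [hin]
      push_cast
      ring
  have hε6 : (0:ℝ) ≤ ε/6 := by linarith
  have key : ∀ t, t ≤ T → ENNReal.ofReal (t * (ε/6)) ≤ volume (U t) := by
    intro t
    induction t with
    | zero =>
      intro _
      simp
    | succ t ih =>
      intro ht1
      have ih' := ih (by omega)
      set c : ℝ := ((4:ℝ)^(t+1))⁻¹ with hc
      have hcpos : 0 < c := by rw [hc]; positivity
      set Lv := Finset.Ico (pbase (t+1)) (pbase (t+2)) with hLvdef
      have hLvmem : ∀ i ∈ Lv, plvl i = t+1 ∧ off i = i - pbase (t+1) ∧ i < pbase (T+1)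
          ∧ i - pbase (t+1) < 4^(t+1) := by
        intro i hi
        rw [hLvdef, Finset.mem_Ico] at hi
        have hjb : i - pbase (t+1) < 4^(t+1) := by
          have hps : pbase (t+2) = pbase (t+1) + 4^(t+1) := pbase_succ (by omega)
          generalize hm : (4:ℕ)^(t+1) = m at hps ⊢
          omega
        have hrep : pbase (t+1) + (i - pbase (t+1)) = i := by omega
        have hlv : plvl i = t+1 := by
          rw [← hrep]
          exact plvl_eq (by omega) hjb
        have hiT : i < pbase (T+1) := by
          have hm : pbase (t+2) ≤ pbase (T+1) := pbase_mono (by omega)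
          omega
        refine ⟨hlv, ?_, hiT, hjb⟩
        simp only [hoff, hlv]
      have hwc : ∀ i ∈ Lv, w i = c := by
        intro i hi
        simp only [hwdef, (hLvmem i hi).1, hc]
      set B : ℕ → Set ℝ := fun i => I i \ {(((i - pbase (t+1) : ℕ) : ℝ) + 1) * c} with hB
      have hBmeas : ∀ i, MeasurableSet (B i) :=
        fun i => (hImeas i).diff (measurableSet_singleton _)
      have hBIcc : ∀ i ∈ Lv, B i ⊆ Ico (((i - pbase (t+1) : ℕ) : ℝ) * c)
          ((((i - pbase (t+1) : ℕ) : ℝ) + 1) * c) := by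
        intro i hi
        obtain ⟨hlv, hof, hiT, hjb⟩ := hLvmem i hi
        intro y hy
        have h1 : y ∈ Icc ((off i : ℝ) * w i) (((off i : ℝ)+1) * w i) := hIsub i hiT hy.1
        rw [hwc i hi, hof] at h1
        exact ⟨h1.1, lt_of_le_of_ne h1.2 hy.2⟩
      have hBvol : ∀ i ∈ Lv, volume (B i) = ENNReal.ofReal (ε * c) := by
        intro i hi
        obtain ⟨hlv, hof, hiT, hjb⟩ := hLvmem i hi
        simp only [hB]
        rw [measure_diff_null Real.volume_singleton]
        rw [hIvol i hiT, hwc i hi]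
      have hwindisj : ∀ a b : ℕ, a < b →
          Disjoint (Ico ((a:ℝ)*c) (((a:ℝ)+1)*c)) (Ico ((b:ℝ)*c) (((b:ℝ)+1)*c)) := by
        intro a b hab
        rw [Set.disjoint_left]
        rintro y ⟨_, hy2⟩ ⟨hy3, _⟩
        have hc1 : ((a:ℝ)+1) ≤ (b:ℝ) := by exact_mod_cast hab
        have := mul_le_mul_of_nonneg_right hc1 hcpos.le
        linarith
      have hBdisj : (Lv : Set ℕ).PairwiseDisjoint B := by
        intro i hi i' hi' hne
        have hii : i ∈ Lv := hi
        have hii' : i' ∈ Lv := hi'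
        have hj : (i - pbase (t+1)) ≠ (i' - pbase (t+1)) := by
          simp only [hLvdef, Finset.coe_Ico, mem_Ico] at hi hi'
          omega
        rcases Nat.lt_or_ge (i - pbase (t+1)) (i' - pbase (t+1)) with h | h
        · exact Disjoint.mono (hBIcc i hii) (hBIcc i' hii') (hwindisj _ _ h)
        · exact Disjoint.mono (hBIcc i hii) (hBIcc i' hii') ((hwindisj _ _ (by omega)).symm)
      set W := ⋃ i ∈ Lv, (B i \ U t) with hW
      have hWmeas : MeasurableSet W :=
        Lv.measurableSet_biUnion (fun i _ => (hBmeas i).diff (hUmeas t))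
      have hWU : Disjoint (U t) W := by
        rw [Set.disjoint_left]
        intro y hyU hyW
        rw [hW, mem_iUnion₂] at hyW
        obtain ⟨i, hi, hyB⟩ := hyW
        exact hyB.2 hyU
      have hsubU : U t ∪ W ⊆ U (t+1) := by
        apply union_subset
        · refine iUnion₂_subset fun i hi => ?_
          rw [Finset.mem_range] at hi
          have hlt : i < pbase (t+2) := by
            have hm : pbase (t+1) ≤ pbase (t+2) := pbase_mono (by omega)
            omega
          exact subset_biUnion_of_mem (Finset.mem_range.2 hlt)
        · rw [hW]
          refine iUnion₂_subset fun i hi => ?_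
          rw [hLvdef, Finset.mem_Ico] at hi
          intro y hy
          exact mem_biUnion (Finset.mem_range.2 hi.2) hy.1.1
      have hstep1 : volume (U t) + volume W ≤ volume (U (t+1)) := by
        rw [← measure_union hWU hWmeas]
        exact measure_mono hsubU
      have hWsum : volume W = ∑ i ∈ Lv, volume (B i \ U t) := by
        rw [hW, measure_biUnion_finset ?_ (fun i _ => (hBmeas i).diff (hUmeas t))]
        intro i hi i' hi' hne
        exact (hBdisj hi hi' hne).mono diff_subset diff_subset
      have hBsum : ∑ i ∈ Lv, volume (B i) = ENNReal.ofReal ε := by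
        rw [Finset.sum_congr rfl hBvol, Finset.sum_const, nsmul_eq_mul]
        have hcard : Lv.card = 4^(t+1) := by
          rw [hLvdef, Nat.card_Ico]
          have hps : pbase (t+2) = pbase (t+1) + 4^(t+1) := pbase_succ (by omega)
          generalize hm : (4:ℕ)^(t+1) = m at hps ⊢
          omega
        rw [hcard, ← ENNReal.ofReal_natCast, ← ENNReal.ofReal_mul (by positivity)]
        congr 1
        push_cast
        rw [hc]
        field_simp
      have hHbound : ∑ i ∈ Lv, volume (I i ∩ U t) ≤ ENNReal.ofReal (5*ε/6) := by
        have hstep : ∀ i ∈ Lv, volume (I i ∩ U t)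
            ≤ ∑ i' ∈ Finset.range (pbase (t+1)), volume (I i ∩ I i') := by
          intro i _
          have he : I i ∩ U t = ⋃ i' ∈ Finset.range (pbase (t+1)), (I i ∩ I i') := by
            rw [hU]
            exact inter_iUnion₂ _ _
          rw [he]
          exact measure_biUnion_finset_le _ _
        calc ∑ i ∈ Lv, volume (I i ∩ U t)
            ≤ ∑ i ∈ Lv, ∑ i' ∈ Finset.range (pbase (t+1)), volume (I i ∩ I i') :=
              Finset.sum_le_sum hstep
          _ = ∑ i' ∈ Finset.range (pbase (t+1)), ∑ i ∈ Lv, volume (I i ∩ I i') :=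
              Finset.sum_comm
          _ ≤ ∑ i' ∈ Finset.range (pbase (t+1)),
              ENNReal.ofReal (ε * (ε * w i') + 2 * (ε * c)) := by
              apply Finset.sum_le_sum
              intro i' hi'
              rw [Finset.mem_range] at hi'
              have hi'T : i' < pbase (T+1) := by
                have hm : pbase (t+1) ≤ pbase (T+1) := pbase_mono (by omega)
                omega
              have hin' : i' < n := by omega
              have hα : 0 ≤ s ⟨i', by omega⟩ := hsnn i' (by omega) hi'T
              rw [hIint i' hi'T]
              refine sum_inter_le Lv (fun i => i - pbase (t+1)) ?_ c ε
                (s ⟨i', by omega⟩) (ε * w i') hcpos hεpos.le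
                hα (mul_nonneg hεpos.le (hwpos i').le) I ?_ ?_
              · intro a ha b hb hab
                simp only [hLvdef, Finset.coe_Ico, mem_Ico] at ha hb
                have hab' : a - pbase (t+1) = b - pbase (t+1) := hab
                omega
              · intro i hi
                obtain ⟨hlv, hof, hiT, hjb⟩ := hLvmem i hi
                have h1 := hIsub i hiT
                rw [hwc i hi, hof] at h1
                exact h1
              · intro i hi
                obtain ⟨hlv, hof, hiT, hjb⟩ := hLvmem i hi
                rw [hIvol i hiT, hwc i hi]
          _ ≤ ENNReal.ofReal (5*ε/6) := by
              rw [← ENNReal.ofReal_sum_of_nonneg]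
              · apply ENNReal.ofReal_le_ofReal
                rw [Finset.sum_add_distrib, Finset.sum_const, Finset.card_range, nsmul_eq_mul]
                have h1 : ∑ i' ∈ Finset.range (pbase (t+1)), ε * (ε * w i')
                    = ε * (ε * t) := by
                  rw [← Finset.mul_sum, ← Finset.mul_sum, hsumw t]
                have h2 : (pbase (t+1) : ℝ) * c ≤ 1/3 := by
                  have h3 := three_pbase (show 1 ≤ t+1 by omega)
                  have h4 : (3:ℝ) * (pbase (t+1) : ℝ) + 4 = 4^(t+1) := by exact_mod_cast h3
                  have h4p : (0:ℝ) < (4:ℝ)^(t+1) := by positivity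
                  have h5 : (pbase (t+1) : ℝ) ≤ 4^(t+1)/3 := by nlinarith
                  calc (pbase (t+1) : ℝ) * c ≤ (4^(t+1)/3) * c :=
                        mul_le_mul_of_nonneg_right h5 hcpos.le
                    _ = 1/3 := by rw [hc]; field_simp
                have hεt : ε * t ≤ 1/6 := by
                  have htT : (t:ℝ) ≤ (T:ℝ) := by exact_mod_cast (by omega : t ≤ T)
                  have hmm := mul_le_mul_of_nonneg_left htT hεpos.le
                  linarith [hεT]
                rw [h1]
                nlinarith [hεpos.le, hεt, h2, hcpos.le]
              · intro i' _
                have h1 : 0 ≤ ε * (ε * w i') :=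
                  mul_nonneg hεpos.le (mul_nonneg hεpos.le (hwpos i').le)
                have h2 : 0 ≤ ε * c := mul_nonneg hεpos.le hcpos.le
                linarith
      have hdiffsum : ENNReal.ofReal (ε/6) ≤ volume W := by
        have h3 : ∑ i ∈ Lv, volume (B i) ≤ volume W + ∑ i ∈ Lv, volume (I i ∩ U t) := by
          rw [hWsum, ← Finset.sum_add_distrib]
          apply Finset.sum_le_sum
          intro i _
          have hsplit : B i ⊆ (B i \ U t) ∪ (I i ∩ U t) := by
            intro y hy
            by_cases hyU : y ∈ U t
            · right
              exact ⟨hy.1, hyU⟩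
            · left
              exact ⟨hy, hyU⟩
          calc volume (B i) ≤ volume ((B i \ U t) ∪ (I i ∩ U t)) := measure_mono hsplit
            _ ≤ volume (B i \ U t) + volume (I i ∩ U t) := measure_union_le _ _
        rw [hBsum] at h3
        have h4 : ENNReal.ofReal ε ≤ volume W + ENNReal.ofReal (5*ε/6) :=
          le_trans h3 (add_le_add_right hHbound _)
        have h5 : ENNReal.ofReal ε - ENNReal.ofReal (5*ε/6) ≤ volume W := by
          rw [tsub_le_iff_right]
          exact h4
        have h6 : ENNReal.ofReal ε - ENNReal.ofReal (5*ε/6) = ENNReal.ofReal (ε/6) := by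
          rw [← ENNReal.ofReal_sub _ (by linarith : (0:ℝ) ≤ 5*ε/6)]
          congr 1
          ring
        rwa [h6] at h5
      calc ENNReal.ofReal ((t+1 : ℕ) * (ε/6))
          = ENNReal.ofReal (t * (ε/6)) + ENNReal.ofReal (ε/6) := by
            rw [← ENNReal.ofReal_add (mul_nonneg (Nat.cast_nonneg t) hε6) hε6]
            congr 1
            push_cast
            ring
        _ ≤ volume (U t) + volume W := add_le_add ih' hdiffsum
        _ ≤ volume (U (t+1)) := hstep1
  have hfinU : volume (U T) ≤ npBusy (fun i : Fin n => p0 i.val) s := by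
    apply measure_mono
    rw [hU]
    refine iUnion₂_subset fun i hi => ?_
    rw [Finset.mem_range] at hi
    have hin : i < n := by omega
    intro y hy
    refine mem_iUnion.2 ⟨⟨i, hin⟩, ?_⟩
    simpa only [hI, dif_pos hin] using hy
  have hTfin := key T le_rfl
  refine le_trans ?_ (le_trans hTfin hfinU)
  apply ENNReal.ofReal_le_ofReal
  have hlog4 : Real.log 4 < 1.3862943616 := by
    have h4 : (4:ℝ) = 2^2 := by norm_num
    rw [h4, Real.log_pow]
    have := Real.log_two_lt_d9
    push_cast
    linarith
  have hlog4nn : 0 ≤ Real.log 4 := Real.log_nonneg (by norm_num)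
  have hlogn : Real.log n ≤ ((T:ℝ)+2) * Real.log 4 := by
    have h1 : n < 4^(k+1) := Nat.lt_pow_succ_log_self (by norm_num) n
    have h2 : (n:ℝ) ≤ (4:ℝ)^(T+2) := by
      have h3 : (n:ℝ) < ((4^(k+1) : ℕ):ℝ) := by exact_mod_cast h1
      have hke : k + 1 = T + 2 := by omega
      rw [hke] at h3
      push_cast at h3
      linarith
    calc Real.log n ≤ Real.log ((4:ℝ)^(T+2)) := Real.log_le_log (by positivity) h2
      _ = ((T:ℝ)+2) * Real.log 4 := by
          rw [Real.log_pow]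
          push_cast
          ring
  have hlogpos : 0 ≤ Real.log n := Real.log_nonneg (by exact_mod_cast (by omega : 1 ≤ n))
  have h10 : Real.log n ≤ 10 * T := by nlinarith [hTr]
  nlinarith [hεpos.le, mul_le_mul_of_nonneg_left h10 hεpos.le]


end PowerPreemptAux

open PowerPreemptAux in
/-- **Theorem 6 (the power of preemption is `Θ(log |E|)` for MINCONNECTIVITY on a path).**
There are constants `c₁, c₂ > 0` such that (i) for every instance on a path with `n ≥ 2` jobs
and every feasible preemptive schedule of busy time `a` there is a feasible non-preemptive
schedule of busy time at most `c₁ · a · log n`, and (ii) for every `ℓ ≥ 2` there are an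
instance with `n = ℓ(ℓ+1)/2` jobs and a feasible preemptive schedule of busy time `P > 0`
such that every feasible non-preemptive schedule has busy time at least `c₂ · P · log n`. -/
theorem power_of_preemption_theta :
    ∃ c₁ c₂ : ℝ, 0 < c₁ ∧ 0 < c₂ ∧
      (∀ (n : ℕ), 2 ≤ n → ∀ r d p : Fin n → ℝ,
        (∀ i, 0 ≤ p i) → (∀ i, r i + p i ≤ d i) →
        ∀ S : Fin n → Set ℝ, PathPFeasible r d p S →
        ∀ a : ℝ, pBusy S = ENNReal.ofReal a →
        ∃ s : Fin n → ℝ, PathNPFeasible r d p s ∧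
          npBusy p s ≤ ENNReal.ofReal (c₁ * a * Real.log n)) ∧
      (∀ ℓ : ℕ, 2 ≤ ℓ →
        ∃ (r d p : Fin (ℓ * (ℓ + 1) / 2) → ℝ) (P : ℝ), 0 < P ∧
          (∀ i, 0 ≤ p i) ∧ (∀ i, r i + p i ≤ d i) ∧
          (∃ S : Fin (ℓ * (ℓ + 1) / 2) → Set ℝ, PathPFeasible r d p S ∧
            pBusy S = ENNReal.ofReal P) ∧
          ∀ s : Fin (ℓ * (ℓ + 1) / 2) → ℝ, PathNPFeasible r d p s →
            ENNReal.ofReal (c₂ * P * Real.log (ℓ * (ℓ + 1) / 2 : ℕ)) ≤ npBusy p s) := by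
  refine ⟨40, 1/60, by norm_num, by norm_num, ?_, ?_⟩
  · intro n hn r d p hp hrd S hS a ha
    exact part_one n hn r d p hp hrd S hS a ha
  · intro ℓ hl
    have h3 : 3 ≤ ℓ * (ℓ + 1) / 2 := by
      have h6 : 6 ≤ ℓ * (ℓ + 1) := by
        calc 6 = 2 * 3 := rfl
          _ ≤ ℓ * (ℓ + 1) := Nat.mul_le_mul hl (by omega)
      omega
    exact PowerPreemptAux.part_two (ℓ * (ℓ + 1) / 2) h3
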